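/- Let (C, Δ_C, α_C) be a Hom-coassociative coalgebra and (M, α_M) a C-comodule with structure map δ : M → C ⊗ M. Then the map δ̃ = (α_C² ⊗ id_M) ∘ δ is the structure map of another C-comodule structure on (M, α_M); that is, δ̃ ∘ α_M = (α_C ⊗ α_M) ∘ δ̃ and (α_C ⊗ δ̃) ∘ δ̃ = (Δ_C ⊗ α_M) ∘ δ̃. -/
import Mathlib


open TensorProduct

/-- Twisting a comodule structure over a Hom-coassociative coalgebra by α_C²
yields another comodule structure. -/
theorem stmt_1 {F : Type*} [Field F] {C M : Type*}
    [AddCommGroup C] [Module F C] [AddCommGroup M] [Module F M]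
    (ΔC : C →ₗ[F] C ⊗[F] C) (αC : C →ₗ[F] C) (αM : M →ₗ[F] M)
    (δ : M →ₗ[F] C ⊗[F] M)
    -- (C, Δ_C, α_C) is a Hom-coassociative coalgebra
    (hcm : ΔC ∘ₗ αC = TensorProduct.map αC αC ∘ₗ ΔC)
    (hca : TensorProduct.map αC ΔC ∘ₗ ΔC =
      (TensorProduct.assoc F C C C).toLinearMap ∘ₗ TensorProduct.map ΔC αC ∘ₗ ΔC)
    -- δ is a C-comodule structure on (M, α_M)
    (hδm : δ ∘ₗ αM = TensorProduct.map αC αM ∘ₗ δ)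
    (hδ : TensorProduct.map αC δ ∘ₗ δ =
      (TensorProduct.assoc F C C M).toLinearMap ∘ₗ TensorProduct.map ΔC αM ∘ₗ δ) :
    -- δ̃ = (α_C² ⊗ id_M) ∘ δ is again a C-comodule structure on (M, α_M)
    (TensorProduct.map (αC ∘ₗ αC) LinearMap.id ∘ₗ δ) ∘ₗ αM =
      TensorProduct.map αC αM ∘ₗ (TensorProduct.map (αC ∘ₗ αC) LinearMap.id ∘ₗ δ) ∧
    TensorProduct.map αC (TensorProduct.map (αC ∘ₗ αC) LinearMap.id ∘ₗ δ) ∘ₗ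
        (TensorProduct.map (αC ∘ₗ αC) LinearMap.id ∘ₗ δ) =
      (TensorProduct.assoc F C C M).toLinearMap ∘ₗ TensorProduct.map ΔC αM ∘ₗ
        (TensorProduct.map (αC ∘ₗ αC) LinearMap.id ∘ₗ δ) := by
  constructor
  · rw [LinearMap.comp_assoc, hδm, ← LinearMap.comp_assoc, ← LinearMap.comp_assoc,
      ← TensorProduct.map_comp, ← TensorProduct.map_comp]
    simp [LinearMap.comp_assoc]
  · have l1 : TensorProduct.map αC (TensorProduct.map (αC ∘ₗ αC) LinearMap.id ∘ₗ δ) ∘ₗ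
        (TensorProduct.map (αC ∘ₗ αC) LinearMap.id ∘ₗ δ) =
        TensorProduct.map (αC ∘ₗ αC) (TensorProduct.map (αC ∘ₗ αC) LinearMap.id) ∘ₗ
          (TensorProduct.map αC δ ∘ₗ δ) := by
      rw [← LinearMap.comp_assoc, ← TensorProduct.map_comp]
      conv_rhs => rw [← LinearMap.comp_assoc, ← TensorProduct.map_comp]
      congr 1
    rw [l1, hδ, ← LinearMap.comp_assoc, TensorProduct.map_map_comp_assoc_eq,
      LinearMap.comp_assoc]
    congr 1
    rw [← LinearMap.comp_assoc, ← LinearMap.comp_assoc, ← TensorProduct.map_comp,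
      ← TensorProduct.map_comp]
    have h2 : ΔC ∘ₗ αC ∘ₗ αC = TensorProduct.map (αC ∘ₗ αC) (αC ∘ₗ αC) ∘ₗ ΔC := by
      rw [← LinearMap.comp_assoc, hcm, LinearMap.comp_assoc, hcm, ← LinearMap.comp_assoc,
        ← TensorProduct.map_comp]
    rw [h2]
    simp
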